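/- For all p₁, p₂, p₃ each equal to 0 or belonging to [1, ∞), and every h₀ with 0 < h₀ < 1/(s·c·c₃), there exists a constant c₄ > 0, depending only on p₁, p₂, p₃, s, c₃, c, m and h₀, such that: for every probability space, every drift function a and diffusion functions b¹, …, b^m, every admissible coefficient set, every h ∈ (0, h₀), every t ∈ ℝ, every random data (G₁, …, G_m, Z) with E‖Z‖^{p₃} < ∞ and associated random stage values, and all indices j₁, j₂, j₃ ∈ {1, …, m}: E[ |G_{j₁}|^{p₁} · |ξ̂_{j₂,j₃}|^{p₂} · max_{1≤k≤m, 1≤i≤s} ‖H⁽ᵏ⁾_i − Z‖^{p₃} ] ≤ c₄ · (1 + E‖Z‖^{p₃}) · h^{p₁/2 + p₂ + p₃} (a factor with exponent 0 is taken to be 1). (Lemma 6.4 in the commutative-noise form with ξ̂ = I^C or J^C, as asserted in Sections 6.5 and 6.6.) -/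

import Mathlib

open MeasureTheory ProbabilityTheory Real

lemma pow_le_exp_sq (a : ℕ) (c x : ℝ) (hc : 0 < c) :
    x ^ (2*a) ≤ a.factorial * c⁻¹ ^ a * Real.exp (c * x^2) := by
  have h1 : (c * x ^ 2) ^ a / a.factorial ≤ Real.exp (c * x ^ 2) :=
    Real.pow_div_factorial_le_exp _ (by positivity) a
  rw [pow_mul]
  have := mul_le_mul_of_nonneg_left h1 (le_of_lt (by positivity : (0:ℝ) < a.factorial * c⁻¹ ^ a))
  calc (x^2)^a = a.factorial * c⁻¹ ^ a * ((c * x^2)^a / a.factorial) := by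
        field_simp [mul_pow]; ring_nf; rw [mul_assoc, ← mul_pow, mul_inv_cancel₀ hc.ne', one_pow, mul_one]
    _ ≤ _ := this

lemma integrable_pow_gauss01 (a : ℕ) :
    Integrable (fun x : ℝ => x ^ (2*a)) (gaussianReal 0 1) := by
  rw [gaussianReal_of_var_ne_zero _ one_ne_zero]
  rw [integrable_withDensity_iff (measurable_gaussianPDF 0 1)
    (Filter.Eventually.of_forall fun x => ENNReal.ofReal_lt_top)]
  have hpdf : ∀ x : ℝ, ((gaussianPDF 0 1 x).toReal) = gaussianPDFReal 0 1 x := fun x =>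
    ENNReal.toReal_ofReal (gaussianPDFReal_nonneg 0 1 x)
  simp only [hpdf]
  have hmeas : AEStronglyMeasurable (fun x : ℝ => x ^ (2*a) * gaussianPDFReal 0 1 x) volume :=
    ((measurable_id.pow_const _).mul (measurable_gaussianPDFReal 0 1)).aestronglyMeasurable
  refine Integrable.mono' (g := fun x =>
      ((a.factorial : ℝ) * ((4:ℝ)⁻¹)⁻¹ ^ a * (Real.sqrt (2*π*1))⁻¹) * Real.exp (-(4:ℝ)⁻¹ * x^2))
    (Integrable.const_mul (integrable_exp_neg_mul_sq (by norm_num)) _) hmeas ?_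
  refine Filter.Eventually.of_forall fun x => ?_
  have hpdfval : gaussianPDFReal 0 1 x = (Real.sqrt (2*π*1))⁻¹ * Real.exp (-x^2/2) := by
    rw [gaussianPDFReal]; norm_num
  have h0 : (0:ℝ) ≤ gaussianPDFReal 0 1 x := gaussianPDFReal_nonneg 0 1 x
  rw [norm_mul, norm_pow, norm_eq_abs, norm_eq_abs, abs_of_nonneg h0]; show |x| ^ (2*a) * gaussianPDFReal 0 1 x ≤ _
  have h1 : |x| ^ (2*a) = x ^ (2*a) := by
    rw [pow_mul, pow_mul, sq_abs]
  rw [h1, hpdfval]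
  have h2 : x ^ (2*a) ≤ (a.factorial : ℝ) * ((4:ℝ)⁻¹)⁻¹ ^ a * Real.exp ((4:ℝ)⁻¹ * x^2) :=
    pow_le_exp_sq a _ x (by norm_num)
  have h3 : (0:ℝ) < (Real.sqrt (2*π*1))⁻¹ := by
    rw [inv_pos]; apply Real.sqrt_pos.2; positivity
  calc x ^ (2*a) * ((Real.sqrt (2*π*1))⁻¹ * Real.exp (-x^2/2))
      ≤ ((a.factorial : ℝ) * ((4:ℝ)⁻¹)⁻¹ ^ a * Real.exp ((4:ℝ)⁻¹ * x^2)) *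
        ((Real.sqrt (2*π*1))⁻¹ * Real.exp (-x^2/2)) := by
        apply mul_le_mul_of_nonneg_right h2 (by positivity)
    _ = ((a.factorial : ℝ) * ((4:ℝ)⁻¹)⁻¹ ^ a * (Real.sqrt (2*π*1))⁻¹) *
        (Real.exp ((4:ℝ)⁻¹ * x^2) * Real.exp (-x^2/2)) := by ring
    _ = _ := by
        rw [← Real.exp_add]
        congr 1
        ring_nf

noncomputable def gmom (a : ℕ) : ℝ := ∫ x, x ^ (2*a) ∂(gaussianReal 0 1)

lemma gmom_nonneg (a : ℕ) : 0 ≤ gmom a :=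
  integral_nonneg fun x => by rw [pow_mul]; positivity

lemma gauss_scale (h : ℝ) (hh : 0 < h) :
    gaussianReal 0 h.toNNReal
      = Measure.map (fun x => Real.sqrt h * x) (gaussianReal 0 1) := by
  rw [show (fun x : ℝ => Real.sqrt h * x) = (Real.sqrt h * ·) by rfl,
    gaussianReal_map_const_mul]
  congr 1
  · ring
  · ext
    simp only [NNReal.coe_mul, NNReal.coe_mk, NNReal.coe_one, mul_one]
    rw [Real.sq_sqrt hh.le, Real.coe_toNNReal _ hh.le]

lemma meas_pow (a : ℕ) : Measurable (fun x : ℝ => x ^ (2*a)) :=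
  measurable_id.pow_const _

lemma integrable_pow_gauss (a : ℕ) (h : ℝ) (hh : 0 < h) :
    Integrable (fun x : ℝ => x ^ (2*a)) (gaussianReal 0 h.toNNReal) := by
  rw [gauss_scale h hh]
  rw [integrable_map_measure (meas_pow a).aestronglyMeasurable
    (measurable_const_mul _).aemeasurable]
  have : ((fun x : ℝ => x ^ (2*a)) ∘ (fun x => Real.sqrt h * x))
      = fun x => (Real.sqrt h) ^ (2*a) * x ^ (2*a) := by
    funext x; simp [mul_pow]
  rw [this]
  exact (integrable_pow_gauss01 a).const_mul _

lemma integral_pow_gauss (a : ℕ) (h : ℝ) (hh : 0 < h) :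
    (∫ x, x ^ (2*a) ∂(gaussianReal 0 h.toNNReal)) = h ^ a * gmom a := by
  rw [gauss_scale h hh,
    integral_map (measurable_const_mul _).aemeasurable
      (meas_pow a).aestronglyMeasurable]
  simp only [mul_pow]
  rw [integral_const_mul]
  congr 1
  rw [pow_mul, Real.sq_sqrt hh.le]

lemma measurable_rpow_const' {p : ℝ} (hp : 0 ≤ p) : Measurable fun x : ℝ => x ^ p :=
  (continuous_iff_continuousAt.2 fun x => Real.continuousAt_rpow_const x p (Or.inr hp)).measurable

lemma one_add_rpow_le (x p : ℝ) (hx : 0 ≤ x) (hp : 0 ≤ p) : (1+x)^p ≤ 2^p * (1 + x^p) := by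
  have h1 : (1:ℝ)+x ≤ 2 * max 1 x := by
    rcases le_total x 1 with h|h
    · have := le_max_left (1:ℝ) x; linarith
    · have := le_max_right (1:ℝ) x; linarith
  have h2 : (max 1 x)^p ≤ 1 + x^p := by
    rcases le_total x 1 with h|h
    · rw [max_eq_left h, Real.one_rpow]
      have := Real.rpow_nonneg hx p; linarith
    · rw [max_eq_right h]
      have := Real.rpow_nonneg hx p
      nlinarith [Real.rpow_nonneg hx p]
  calc (1+x)^p ≤ (2 * max 1 x)^p :=
        Real.rpow_le_rpow (by linarith) h1 hp
    _ = 2^p * (max 1 x)^p := Real.mul_rpow (by norm_num) (le_max_of_le_left zero_le_one)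
    _ ≤ 2^p * (1 + x^p) := by
        have h2p : (0:ℝ) ≤ 2^p := Real.rpow_nonneg (by norm_num) p
        exact mul_le_mul_of_nonneg_left h2 h2p

lemma sum_filter_lt_eq {s : ℕ} (i : Fin s) (f : ℕ → ℝ) :
    ∑ j ∈ Finset.univ.filter (fun j : Fin s => j < i), f j.val
      = ∑ jj ∈ Finset.range i.val, f jj := by
  rw [Finset.sum_filter]
  have h1 : (∑ a : Fin s, if a < i then f a.val else 0)
      = ∑ a : Fin s, (fun jj : ℕ => if jj < i.val then f jj else 0) a.val := by
    apply Finset.sum_congr rfl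
    intro a _
    simp only [Fin.lt_def]
  rw [h1, Fin.sum_univ_eq_sum_range (fun jj : ℕ => if jj < i.val then f jj else 0) s]
  rw [← Finset.sum_filter]
  congr 1
  ext jj
  simp only [Finset.mem_filter, Finset.mem_range]
  constructor
  · rintro ⟨_, hj⟩; exact hj
  · intro hj; exact ⟨lt_trans hj i.isLt, hj⟩
set_option maxHeartbeats 4000000 in
theorem stmt_9 (s m : ℕ) (hs : 0 < s) (hm : 0 < m)
    (c c₃ : ℝ) (hc : 0 < c) (hc₃ : 0 < c₃)
    (p₁ p₂ p₃ : ℝ) (hp₁ : p₁ = 0 ∨ 1 ≤ p₁) (hp₂ : p₂ = 0 ∨ 1 ≤ p₂) (hp₃ : p₃ = 0 ∨ 1 ≤ p₃)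
    (h₀ : ℝ) (hh₀ : 0 < h₀) (hh₀' : h₀ < 1 / ((s : ℝ) * c * c₃)) :
    ∃ c₄ > (0 : ℝ),
      ∀ (d : ℕ) (Ω : Type) [MeasurableSpace Ω] (μ : Measure Ω) [IsProbabilityMeasure μ]
        (a : ℝ → EuclideanSpace ℝ (Fin d) → EuclideanSpace ℝ (Fin d)),
        (∀ t x, ‖a t x‖ ≤ c * (1 + ‖x‖)) →
        ∀ (b : Fin m → ℝ → EuclideanSpace ℝ (Fin d) → EuclideanSpace ℝ (Fin d)),
          (∀ k t x, ‖b k t x‖ ≤ c * (1 + ‖x‖)) →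
        ∀ (A0 A1 B1 : Fin s → Fin s → ℝ) (c0 c1 : Fin s → ℝ),
          (∀ i j, |A0 i j| ≤ c₃) → (∀ i j, |A1 i j| ≤ c₃) → (∀ i j, |B1 i j| ≤ c₃) →
          (∀ i j, i ≤ j → B1 i j = 0) →
          (∀ j, |c0 j| ≤ c₃) → (∀ j, |c1 j| ≤ c₃) →
        ∀ (h : ℝ), 0 < h → h < h₀ →
        ∀ (t : ℝ) (G : Fin m → Ω → ℝ) (Z : Ω → EuclideanSpace ℝ (Fin d)),
          (∀ k, Measurable (G k)) → Measurable Z →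
          iIndepFun G μ →
          (∀ k, Measure.map (G k) μ = gaussianReal 0 h.toNNReal) →
          IndepFun Z (fun ω (k : Fin m) => G k ω) μ →
          Integrable (fun ω => ‖Z ω‖ ^ p₃) μ →
        ∀ (ξ : Fin m → Fin m → Ω → ℝ),
          ((∀ r k ω, ξ r k ω = G r ω * G k ω / 2) ∨
            (∀ r k ω, ξ r k ω = G r ω * G k ω / 2 - if r = k then h / 2 else 0)) →
        ∀ (H0 : Fin s → Ω → EuclideanSpace ℝ (Fin d))
          (H : Fin m → Fin s → Ω → EuclideanSpace ℝ (Fin d)),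
          (∀ i, Measurable (H0 i)) →
          (∀ᵐ ω ∂μ, ∀ i, H0 i ω = Z ω + h • ∑ j, A0 i j • a (t + c0 j * h) (H0 j ω)) →
          (∀ k i ω, H k i ω = Z ω + h • (∑ j, A1 i j • a (t + c0 j * h) (H0 j ω))
            + ∑ r, ∑ j ∈ Finset.univ.filter (fun j => j < i),
                (B1 i j * ξ r k ω) • b r (t + c1 j * h) (H r j ω)) →
        ∀ (j₁ j₂ j₃ : Fin m),
          ∫ ω, |G j₁ ω| ^ p₁ * |ξ j₂ j₃ ω| ^ p₂ *
              (⨆ ki : Fin m × Fin s, ‖H ki.1 ki.2 ω - Z ω‖ ^ p₃) ∂μ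
            ≤ c₄ * (1 + ∫ ω, ‖Z ω‖ ^ p₃ ∂μ) * h ^ (p₁ / 2 + p₂ + p₃) := by
  have hp₁0 : 0 ≤ p₁ := hp₁.elim (fun h => h.symm.le) (fun h => zero_le_one.trans h)
  have hp₂0 : 0 ≤ p₂ := hp₂.elim (fun h => h.symm.le) (fun h => zero_le_one.trans h)
  have hp₃0 : 0 ≤ p₃ := hp₃.elim (fun h => h.symm.le) (fun h => zero_le_one.trans h)
  set scc : ℝ := (s:ℝ) * c * c₃ with hscc_def
  have hscc0 : 0 < scc := by
    have : (0:ℝ) < (s:ℝ) := Nat.cast_pos.mpr hs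
    positivity
  have hq₀1 : h₀ * scc < 1 := by
    have := (lt_div_iff₀ hscc0).mp hh₀'
    linarith
  have hq₀0 : 0 < h₀ * scc := mul_pos hh₀ hscc0
  set K₀ : ℝ := scc / (1 - h₀ * scc) with hK₀_def
  have hK₀0 : 0 < K₀ := div_pos hscc0 (by linarith)
  set C₁ : ℝ := scc * (1 + K₀ * h₀) with hC₁_def
  have hC₁0 : 0 < C₁ := by positivity
  set ccm : ℝ := c * c₃ * (m:ℝ) with hccm_def
  have hccm0 : 0 < ccm := by
    have : (0:ℝ) < (m:ℝ) := Nat.cast_pos.mpr hm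
    positivity
  set C₂ : ℝ := (C₁ + ccm * (s:ℝ)) * (1 + ccm)^s with hC₂_def
  have hC₂0 : 0 < C₂ := by
    have h1 : (0:ℝ) < C₁ + ccm * s := by positivity
    have h2 : (0:ℝ) < (1 + ccm)^s := by positivity
    positivity
  set C₆ : ℝ := C₂ * (1 + h₀)^s with hC₆_def
  have hC₆0 : 0 < C₆ := by positivity
  set C₅ : ℝ := C₆ ^ p₃ with hC₅_def
  have hC₅0 : 0 < C₅ := Real.rpow_pos_of_pos hC₆0 p₃
  set Q : ℝ := p₁ + 2*p₂ + (2 + 2*(s:ℝ))*p₃ with hQ_def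
  have hQ0 : 0 ≤ Q := by
    have hs0 : (0:ℝ) ≤ (s:ℝ) := Nat.cast_nonneg s
    have : 0 ≤ (2 + 2*(s:ℝ))*p₃ := by positivity
    positivity
  set a₀ : ℕ := ⌈Q⌉₊ with ha₀_def
  set n : ℕ := 2 * a₀ with hn_def
  have hQn : Q ≤ (n:ℝ) := by
    refine (Nat.le_ceil Q).trans ?_
    rw [hn_def]
    push_cast
    have : (0:ℝ) ≤ (a₀:ℝ) := Nat.cast_nonneg a₀
    linarith
  set κ : ℝ := 1 + (m:ℝ) * gmom a₀ with hκ_def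
  have hκ1 : 1 ≤ κ := by
    have := gmom_nonneg a₀
    have hm0 : (0:ℝ) ≤ (m:ℝ) := Nat.cast_nonneg m
    nlinarith
  have h2p₃ : (0:ℝ) < 2 ^ p₃ := Real.rpow_pos_of_pos two_pos p₃
  refine ⟨C₅ * 2 ^ p₃ * κ, by positivity, ?_⟩
  intro d Ω _ μ _ a ha b hb A0 A1 B1 c0 c1 hA0 hA1 hB1 hB1lt hc0 hc1 h hh hhh₀ t G Z
    hGmeas hZmeas hGindep hGmap hZGindep hZint ξ hξ H0 H hH0meas hH0eq hHeq j₁ j₂ j₃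
  haveI hne_m : Nonempty (Fin m) := ⟨⟨0, hm⟩⟩
  haveI hne_s : Nonempty (Fin s) := ⟨⟨0, hs⟩⟩
  have hsqrt : 0 < Real.sqrt h := Real.sqrt_pos.2 hh
  set W : Ω → ℝ := fun ω => 1 + ‖Z ω‖ with hW_def
  have hWval : ∀ ω, W ω = 1 + ‖Z ω‖ := fun ω => rfl
  have hW1 : ∀ ω, 1 ≤ W ω := fun ω => by
    have := norm_nonneg (Z ω); rw [hWval ω]; linarith
  have hW0 : ∀ ω, 0 ≤ W ω := fun ω => zero_le_one.trans (hW1 ω)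
  set S : Ω → ℝ := fun ω => Finset.univ.sup' Finset.univ_nonempty (fun k : Fin m => |G k ω|)
    with hS_def
  set M₀ : Ω → ℝ := fun ω => max 1 (S ω / Real.sqrt h) with hM₀_def
  have hM₀1 : ∀ ω, 1 ≤ M₀ ω := fun ω => le_max_left _ _
  have hM₀0 : ∀ ω, 0 < M₀ ω := fun ω => lt_of_lt_of_le zero_lt_one (hM₀1 ω)
  set M : Ω → ℝ := fun ω => Real.sqrt h * M₀ ω with hM_def
  have hM0 : ∀ ω, 0 < M ω := fun ω => mul_pos hsqrt (hM₀0 ω)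
  have hGM : ∀ k ω, |G k ω| ≤ M ω := by
    intro k ω
    have h1 : |G k ω| ≤ S ω := by
      simp only [hS_def]
      exact Finset.le_sup' (fun k : Fin m => |G k ω|) (Finset.mem_univ k)
    have h2 : S ω / Real.sqrt h ≤ M₀ ω := le_max_right _ _
    have h3 : S ω ≤ Real.sqrt h * M₀ ω := by
      rw [div_le_iff₀ hsqrt] at h2; linarith [h2]
    exact h1.trans h3
  have hMsq : ∀ ω, (M ω)^2 = h * (M₀ ω)^2 := fun ω => by
    simp only [hM_def]; rw [mul_pow, Real.sq_sqrt hh.le]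
  have hM₀sq1 : ∀ ω, 1 ≤ (M₀ ω)^2 := fun ω => by nlinarith [hM₀1 ω]
  have hhM : ∀ ω, h ≤ (M ω)^2 := fun ω => by
    rw [hMsq ω]
    nlinarith [hM₀sq1 ω, hh.le]
  have hξM : ∀ r k ω, |ξ r k ω| ≤ (M ω)^2 := by
    intro r k ω
    have hGG : |G r ω * G k ω / 2| ≤ (M ω)^2 / 2 := by
      rw [abs_div, abs_mul]
      have := hGM r ω; have := hGM k ω
      have h1 : |G r ω| * |G k ω| ≤ M ω * M ω := by
        apply mul_le_mul (hGM r ω) (hGM k ω) (abs_nonneg _) (hM0 ω).le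
      rw [abs_two]
      nlinarith
    have hM2 : 0 ≤ (M ω)^2 := sq_nonneg _
    rcases hξ with hξ | hξ
    · rw [hξ]; nlinarith
    · rw [hξ]
      refine (abs_sub _ _).trans ?_
      have : |if r = k then h / 2 else 0| ≤ (M ω)^2/2 := by
        split
        · rw [abs_of_nonneg (by linarith : (0:ℝ) ≤ h/2)]
          have := hhM ω; linarith
        · simp only [abs_zero]; positivity
      nlinarith
  -- a.e. pointwise key bound
  have key : ∀ᵐ ω ∂μ,
      |G j₁ ω| ^ p₁ * |ξ j₂ j₃ ω| ^ p₂ *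
          (⨆ ki : Fin m × Fin s, ‖H ki.1 ki.2 ω - Z ω‖ ^ p₃)
        ≤ C₅ * h ^ (p₁/2 + p₂ + p₃) * (W ω ^ p₃ * (M₀ ω)^n) := by
    filter_upwards [hH0eq] with ω hω
    -- drift stage bound
    set D0 : ℝ := Finset.univ.sup' Finset.univ_nonempty
      (fun j : Fin s => ‖H0 j ω - Z ω‖) with hD0_def
    have hD0mem : ∀ i : Fin s, ‖H0 i ω - Z ω‖ ≤ D0 := fun i => by
      simp only [hD0_def]
      exact Finset.le_sup' (fun j : Fin s => ‖H0 j ω - Z ω‖) (Finset.mem_univ i)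
    have hD0nn : 0 ≤ D0 := le_trans (norm_nonneg _) (hD0mem ⟨0, hs⟩)
    have hstep0 : ∀ i : Fin s, ‖H0 i ω - Z ω‖ ≤ h * scc * (W ω + D0) := by
      intro i
      have hdiff : H0 i ω - Z ω = h • ∑ j, A0 i j • a (t + c0 j * h) (H0 j ω) := by
        rw [hω i]; abel
      rw [hdiff, norm_smul, Real.norm_eq_abs, abs_of_nonneg hh.le]
      have hsum : ‖∑ j, A0 i j • a (t + c0 j * h) (H0 j ω)‖
          ≤ ∑ _j : Fin s, c₃ * (c * (W ω + D0)) := by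
        refine (norm_sum_le _ _).trans (Finset.sum_le_sum fun j _ => ?_)
        rw [norm_smul, Real.norm_eq_abs]
        have hba : ‖a (t + c0 j * h) (H0 j ω)‖ ≤ c * (W ω + D0) := by
          refine (ha _ _).trans ?_
          have h1 : ‖H0 j ω‖ ≤ ‖Z ω‖ + ‖H0 j ω - Z ω‖ := by
            calc ‖H0 j ω‖ = ‖Z ω + (H0 j ω - Z ω)‖ := by rw [add_sub_cancel]
              _ ≤ _ := norm_add_le _ _
          have h2 := hD0mem j
          have h3 : (1:ℝ) + ‖H0 j ω‖ ≤ W ω + D0 := by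
            rw [hWval ω]; linarith
          exact mul_le_mul_of_nonneg_left h3 hc.le
        exact mul_le_mul (hA0 i j) hba (norm_nonneg _) hc₃.le
      refine le_trans (mul_le_mul_of_nonneg_left hsum hh.le) (le_of_eq ?_)
      rw [Finset.sum_const, Finset.card_univ, Fintype.card_fin, nsmul_eq_mul, hscc_def]
      ring
    have hD0le : D0 ≤ K₀ * h * W ω := by
      have h1 : D0 ≤ h * scc * (W ω + D0) := by
        simp only [hD0_def]
        exact Finset.sup'_le _ _ fun i _ => hstep0 i
      rw [hK₀_def, div_mul_eq_mul_div, div_mul_eq_mul_div, le_div_iff₀ (by linarith)]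
      nlinarith [mul_le_mul_of_nonneg_right hhh₀.le (mul_nonneg hscc0.le hD0nn), hW0 ω]
    -- diffusion recursion
    set β : ℝ := ccm * (M ω)^2 with hβ_def
    have hβ0 : 0 < β := by
      have := hM0 ω
      simp only [hβ_def]
      positivity
    have h1β : (1:ℝ) ≤ 1 + β := by linarith
    set T : ℝ := C₁ * h * W ω + β * (s:ℝ) * W ω with hT_def
    have hT0 : 0 ≤ T :=
      add_nonneg (mul_nonneg (mul_nonneg hC₁0.le hh.le) (hW0 ω))
        (mul_nonneg (mul_nonneg hβ0.le (Nat.cast_nonneg s)) (hW0 ω))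
    set N : Fin s → ℝ := fun i => Finset.univ.sup' Finset.univ_nonempty
      (fun r : Fin m => ‖H r i ω - Z ω‖) with hN_def
    have hNmem : ∀ (r : Fin m) (i : Fin s), ‖H r i ω - Z ω‖ ≤ N i := fun r i => by
      simp only [hN_def]
      exact Finset.le_sup' (fun r : Fin m => ‖H r i ω - Z ω‖) (Finset.mem_univ r)
    have step : ∀ i : Fin s, (∀ j : Fin s, j < i → N j ≤ T * (1+β)^(j:ℕ)) →
        N i ≤ T * (1+β)^(i:ℕ) := by
      intro i IH
      simp only [hN_def]
      refine Finset.sup'_le _ _ fun k _ => ?_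
      have hdiff : H k i ω - Z ω = h • (∑ j, A1 i j • a (t + c0 j * h) (H0 j ω))
          + ∑ r, ∑ j ∈ Finset.univ.filter (fun j => j < i),
              (B1 i j * ξ r k ω) • b r (t + c1 j * h) (H r j ω) := by
        rw [hHeq k i ω]; abel
      rw [hdiff]
      refine (norm_add_le _ _).trans ?_
      have hterm1 : ‖h • ∑ j, A1 i j • a (t + c0 j * h) (H0 j ω)‖ ≤ C₁ * h * W ω := by
        rw [norm_smul, Real.norm_eq_abs, abs_of_nonneg hh.le]
        have hsum : ‖∑ j, A1 i j • a (t + c0 j * h) (H0 j ω)‖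
            ≤ ∑ _j : Fin s, c₃ * (c * ((1 + K₀ * h) * W ω)) := by
          refine (norm_sum_le _ _).trans (Finset.sum_le_sum fun j _ => ?_)
          rw [norm_smul, Real.norm_eq_abs]
          have hba : ‖a (t + c0 j * h) (H0 j ω)‖ ≤ c * ((1 + K₀ * h) * W ω) := by
            refine (ha _ _).trans ?_
            have h1 : ‖H0 j ω‖ ≤ ‖Z ω‖ + ‖H0 j ω - Z ω‖ := by
              calc ‖H0 j ω‖ = ‖Z ω + (H0 j ω - Z ω)‖ := by rw [add_sub_cancel]
                _ ≤ _ := norm_add_le _ _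
            have h2 := (hD0mem j).trans hD0le
            have h3 : (1:ℝ) + ‖H0 j ω‖ ≤ (1 + K₀ * h) * W ω := by
              have h4 := hWval ω
              have h5 := hW1 ω
              nlinarith [h1, h2]
            exact mul_le_mul_of_nonneg_left h3 hc.le
          exact mul_le_mul (hA1 i j) hba (norm_nonneg _) hc₃.le
        refine le_trans (mul_le_mul_of_nonneg_left hsum hh.le) ?_
        rw [Finset.sum_const, Finset.card_univ, Fintype.card_fin, nsmul_eq_mul]
        rw [hC₁_def, hscc_def]
        have hsW : (0:ℝ) ≤ (s:ℝ) * c * c₃ * h * W ω * K₀ :=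
          mul_nonneg (mul_nonneg (mul_nonneg (mul_nonneg
            (mul_nonneg (Nat.cast_nonneg s) hc.le) hc₃.le) hh.le) (hW0 ω)) hK₀0.le
        linarith [mul_le_mul_of_nonneg_left hhh₀.le hsW]
      have hterm2 : ‖∑ r, ∑ j ∈ Finset.univ.filter (fun j => j < i),
            (B1 i j * ξ r k ω) • b r (t + c1 j * h) (H r j ω)‖
          ≤ β * ∑ jj ∈ Finset.range i.val, (W ω + T * (1+β)^jj) := by
        have hin : ∀ r : Fin m, ‖∑ j ∈ Finset.univ.filter (fun j => j < i),
              (B1 i j * ξ r k ω) • b r (t + c1 j * h) (H r j ω)‖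
            ≤ ∑ j ∈ Finset.univ.filter (fun j : Fin s => j < i),
                (c₃ * (M ω)^2 * (c * (W ω + T * (1+β)^(j:ℕ)))) := by
          intro r
          refine (norm_sum_le _ _).trans (Finset.sum_le_sum fun j hj => ?_)
          have hjlt : j < i := (Finset.mem_filter.mp hj).2
          rw [norm_smul, Real.norm_eq_abs, abs_mul]
          have hbb : ‖b r (t + c1 j * h) (H r j ω)‖ ≤ c * (W ω + T * (1+β)^(j:ℕ)) := by
            refine (hb r _ _).trans ?_
            have h1 : ‖H r j ω‖ ≤ ‖Z ω‖ + ‖H r j ω - Z ω‖ := by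
              calc ‖H r j ω‖ = ‖Z ω + (H r j ω - Z ω)‖ := by rw [add_sub_cancel]
                _ ≤ _ := norm_add_le _ _
            have h2 := (hNmem r j).trans (IH j hjlt)
            have h3 : (1:ℝ) + ‖H r j ω‖ ≤ W ω + T * (1+β)^(j:ℕ) := by
              rw [hWval ω]; linarith
            exact mul_le_mul_of_nonneg_left h3 hc.le
          have hbpos : (0:ℝ) ≤ c * (W ω + T * (1+β)^(j:ℕ)) := (norm_nonneg _).trans hbb
          refine mul_le_mul ?_ hbb (norm_nonneg _) ?_
          · exact mul_le_mul (hB1 i j) (hξM r k ω) (abs_nonneg _) hc₃.le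
          · exact mul_nonneg hc₃.le (sq_nonneg _)
        refine (norm_sum_le _ _).trans ?_
        refine le_trans (Finset.sum_le_sum fun r _ => hin r) ?_
        rw [Finset.sum_const, Finset.card_univ, Fintype.card_fin, nsmul_eq_mul]
        rw [sum_filter_lt_eq i (fun jj => c₃ * (M ω)^2 * (c * (W ω + T * (1+β)^jj)))]
        rw [Finset.mul_sum, Finset.mul_sum]
        refine le_of_eq (Finset.sum_congr rfl fun jj _ => ?_)
        rw [hβ_def, hccm_def]
        ring
      refine le_trans (add_le_add hterm1 hterm2) ?_
      have hgeo : β * ∑ jj ∈ Finset.range i.val, (1+β)^jj = (1+β)^(i.val) - 1 := by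
        have hg := geom_sum_mul (1+β) i.val
        rw [add_sub_cancel_left] at hg
        rw [mul_comm]; exact hg
      rw [Finset.sum_add_distrib, Finset.sum_const, Finset.card_range, nsmul_eq_mul,
        ← Finset.mul_sum]
      have his : ((i:ℕ):ℝ) ≤ (s:ℝ) := by exact_mod_cast i.isLt.le
      have hfin : β * (((i:ℕ):ℝ) * W ω) ≤ β * ((s:ℝ) * W ω) :=
        mul_le_mul_of_nonneg_left (mul_le_mul_of_nonneg_right his (hW0 ω)) hβ0.le
      have hexp : β * (((i:ℕ):ℝ) * W ω + T * ∑ jj ∈ Finset.range i.val, (1+β)^jj)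
          = β * (((i:ℕ):ℝ) * W ω) + T * (β * ∑ jj ∈ Finset.range i.val, (1+β)^jj) := by
        ring
      rw [hexp, hgeo, mul_sub, mul_one]
      have hTeq : T = C₁ * h * W ω + β * (s:ℝ) * W ω := hT_def
      linarith [hfin]
    have hNall : ∀ i : Fin s, N i ≤ T * (1+β)^(i:ℕ) := by
      have hrec : ∀ nn : ℕ, ∀ i : Fin s, (i:ℕ) < nn → N i ≤ T * (1+β)^(i:ℕ) := by
        intro nn
        induction nn with
        | zero => exact fun i hi => absurd hi (Nat.not_lt_zero _)
        | succ nn ih =>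
          intro i hi
          refine step i fun j hj => ih j ?_
          have := Fin.lt_def.mp hj
          omega
      exact fun i => hrec s i i.isLt
    -- sup bound
    have hHB : ∀ (k : Fin m) (i : Fin s),
        ‖H k i ω - Z ω‖ ≤ C₆ * (h * ((M₀ ω)^(2+2*s) * W ω)) := by
      intro k i
      refine (hNmem k i).trans ((hNall i).trans ?_)
      have h1 : (1+β)^(i:ℕ) ≤ (1+β)^s := pow_le_pow_right₀ h1β i.isLt.le
      have hT2 : T ≤ (C₁ + ccm * (s:ℝ)) * ((M ω)^2 * W ω) := by
        rw [hT_def, hβ_def]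
        nlinarith [mul_le_mul_of_nonneg_left (hhM ω) (mul_nonneg hC₁0.le (hW0 ω)),
          mul_nonneg (mul_nonneg hccm0.le (sq_nonneg (M ω)))
            (mul_nonneg (Nat.cast_nonneg s) (hW0 ω))]
      have h2 : (1+β) ≤ (1+ccm) * (1+(M ω)^2) := by
        rw [hβ_def]; nlinarith [hccm0.le, sq_nonneg (M ω)]
      have h3 : (1+β)^s ≤ (1+ccm)^s * (1+(M ω)^2)^s := by
        rw [← mul_pow]; exact pow_le_pow_left₀ (by linarith) h2 s
      have h4 : T * (1+β)^(i:ℕ)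
          ≤ ((C₁ + ccm*(s:ℝ)) * ((M ω)^2 * W ω)) * ((1+ccm)^s * (1+(M ω)^2)^s) := by
        refine mul_le_mul hT2 (h1.trans h3) (pow_nonneg (by linarith) _) ?_
        have := hW0 ω
        positivity
      refine h4.trans ?_
      have h5 : (1+(M ω)^2) ≤ (1+h₀) * (M₀ ω)^2 := by
        rw [hMsq ω]
        nlinarith [hM₀sq1 ω, mul_le_mul_of_nonneg_right hhh₀.le (sq_nonneg (M₀ ω))]
      have h6 : (1+(M ω)^2)^s ≤ (1+h₀)^s * ((M₀ ω)^2)^s := by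
        rw [← mul_pow]
        refine pow_le_pow_left₀ ?_ h5 s
        nlinarith [sq_nonneg (M ω)]
      have h7 : ((C₁ + ccm*(s:ℝ)) * ((M ω)^2 * W ω)) * ((1+ccm)^s * (1+(M ω)^2)^s)
          ≤ ((C₁ + ccm*(s:ℝ)) * ((M ω)^2 * W ω)) * ((1+ccm)^s * ((1+h₀)^s * ((M₀ ω)^2)^s)) := by
        refine mul_le_mul_of_nonneg_left (mul_le_mul_of_nonneg_left h6 (by positivity)) ?_
        have h8 : (0:ℝ) ≤ (M ω)^2 * W ω := mul_nonneg (sq_nonneg _) (hW0 ω)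
        positivity
      refine h7.trans (le_of_eq ?_)
      have hupow : (M₀ ω)^(2+2*s) = (M₀ ω)^2 * ((M₀ ω)^2)^s := by
        rw [← pow_mul, ← pow_add]
      rw [hC₆_def, hC₂_def, hMsq ω, hupow]
      ring
    -- rpow stage
    have hsupnn : (0:ℝ) ≤ ⨆ ki : Fin m × Fin s, ‖H ki.1 ki.2 ω - Z ω‖ ^ p₃ :=
      Real.iSup_nonneg fun ki => Real.rpow_nonneg (norm_nonneg _) _
    have hsup : (⨆ ki : Fin m × Fin s, ‖H ki.1 ki.2 ω - Z ω‖ ^ p₃)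
        ≤ (C₆ * (h * ((M₀ ω)^(2+2*s) * W ω))) ^ p₃ :=
      ciSup_le fun ki => Real.rpow_le_rpow (norm_nonneg _) (hHB ki.1 ki.2) hp₃0
    have hG1 : |G j₁ ω| ^ p₁ ≤ (M ω) ^ p₁ :=
      Real.rpow_le_rpow (abs_nonneg _) (hGM j₁ ω) hp₁0
    have hx2 : |ξ j₂ j₃ ω| ^ p₂ ≤ ((M ω)^2) ^ p₂ :=
      Real.rpow_le_rpow (abs_nonneg _) (hξM j₂ j₃ ω) hp₂0
    have hprod : |G j₁ ω| ^ p₁ * |ξ j₂ j₃ ω| ^ p₂ *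
          (⨆ ki : Fin m × Fin s, ‖H ki.1 ki.2 ω - Z ω‖ ^ p₃)
        ≤ (M ω)^p₁ * ((M ω)^2)^p₂ * ((C₆ * (h * ((M₀ ω)^(2+2*s) * W ω))) ^ p₃) := by
      refine mul_le_mul (mul_le_mul hG1 hx2 (Real.rpow_nonneg (abs_nonneg _) _)
        (Real.rpow_nonneg (hM0 ω).le _)) hsup hsupnn ?_
      exact mul_nonneg (Real.rpow_nonneg (hM0 ω).le _) (Real.rpow_nonneg (sq_nonneg _) _)
    have hBnn : (0:ℝ) ≤ h * ((M₀ ω)^(2+2*s) * W ω) := by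
      have := hW0 ω; positivity
    have hMWnn : (0:ℝ) ≤ (M₀ ω)^(2+2*s) * W ω := by
      have := hW0 ω; positivity
    have e1 : (M ω)^p₁ = h^(p₁/2) * (M₀ ω)^p₁ := by
      simp only [hM_def]
      rw [Real.mul_rpow (Real.sqrt_nonneg h) (hM₀0 ω).le]
      congr 1
      rw [Real.sqrt_eq_rpow, ← Real.rpow_mul hh.le]
      congr 1
      ring
    have e2 : ((M ω)^2)^p₂ = h^p₂ * (M₀ ω)^(2*p₂) := by
      rw [hMsq ω, Real.mul_rpow hh.le (sq_nonneg _)]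
      congr 1
      rw [← Real.rpow_natCast (M₀ ω) 2, ← Real.rpow_mul (hM₀0 ω).le]
      norm_num
    have e3 : ((C₆ * (h * ((M₀ ω)^(2+2*s) * W ω))) ^ p₃)
        = C₅ * (h^p₃ * ((M₀ ω)^((2+2*(s:ℝ))*p₃) * (W ω)^p₃)) := by
      rw [Real.mul_rpow hC₆0.le hBnn, Real.mul_rpow hh.le hMWnn,
        Real.mul_rpow (pow_nonneg (hM₀0 ω).le _) (hW0 ω), hC₅_def]
      congr 2
      rw [← Real.rpow_natCast (M₀ ω) (2+2*s), ← Real.rpow_mul (hM₀0 ω).le]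
      congr 1
      push_cast
      ring
    have e4 : (M ω)^p₁ * ((M ω)^2)^p₂ * ((C₆ * (h * ((M₀ ω)^(2+2*s) * W ω))) ^ p₃)
        = C₅ * h^(p₁/2+p₂+p₃) * ((M₀ ω)^Q * (W ω)^p₃) := by
      rw [e1, e2, e3, hQ_def, Real.rpow_add hh, Real.rpow_add hh,
        Real.rpow_add (hM₀0 ω), Real.rpow_add (hM₀0 ω)]
      ring
    have e5 : (M₀ ω)^Q ≤ (M₀ ω)^(n:ℕ) := by
      calc (M₀ ω)^Q ≤ (M₀ ω)^((n:ℕ):ℝ) :=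
            Real.rpow_le_rpow_of_exponent_le (hM₀1 ω) hQn
        _ = (M₀ ω)^(n:ℕ) := Real.rpow_natCast _ n
    refine (hprod.trans (le_of_eq e4)).trans ?_
    have hfinl : (M₀ ω)^Q * (W ω)^p₃ ≤ W ω ^ p₃ * (M₀ ω)^n := by
      rw [mul_comm]
      exact mul_le_mul_of_nonneg_left e5 (Real.rpow_nonneg (hW0 ω) _)
    refine mul_le_mul_of_nonneg_left hfinl ?_
    exact mul_nonneg hC₅0.le (Real.rpow_nonneg hh.le _)
  -- measurability
  have hWp3meas : Measurable fun ω => W ω ^ p₃ :=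
    (measurable_rpow_const' hp₃0).comp (measurable_const.add hZmeas.norm)
  have hSmeas : Measurable S := by
    have hSe : S = Finset.univ.sup' Finset.univ_nonempty
        (fun k : Fin m => fun ω => |G k ω|) := by
      funext ω; rw [Finset.sup'_apply]
    rw [hSe]
    exact Finset.measurable_sup' _ (fun k _ => (hGmeas k).abs)
  have hM₀meas : Measurable M₀ := measurable_const.max (hSmeas.div_const _)
  have hM₀nmeas : Measurable fun ω => (M₀ ω)^n := hM₀meas.pow_const n
  -- independence of the two factors
  have hindWM : IndepFun (fun ω => W ω ^ p₃) (fun ω => (M₀ ω)^n) μ := by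
    have hφ : Measurable (fun x : EuclideanSpace ℝ (Fin d) => (1 + ‖x‖) ^ p₃) :=
      (measurable_rpow_const' hp₃0).comp (measurable_const.add measurable_norm)
    have hψ : Measurable (fun g : Fin m → ℝ =>
        (max 1 ((Finset.univ.sup' Finset.univ_nonempty fun k : Fin m => |g k|)
          / Real.sqrt h))^n) := by
      have hS' : Measurable (fun g : Fin m → ℝ =>
          Finset.univ.sup' Finset.univ_nonempty fun k : Fin m => |g k|) := by
        have he : (fun g : Fin m → ℝ =>
            Finset.univ.sup' Finset.univ_nonempty fun k : Fin m => |g k|)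
            = Finset.univ.sup' Finset.univ_nonempty
              (fun k : Fin m => fun g : Fin m → ℝ => |g k|) := by
          funext g; rw [Finset.sup'_apply]
        rw [he]
        exact Finset.measurable_sup' _ (fun k _ => (measurable_pi_apply k).abs)
      exact (measurable_const.max (hS'.div_const _)).pow_const n
    exact hZGindep.comp hφ hψ
  -- integrability of W ^ p₃
  have hWp3bound : ∀ ω, W ω ^ p₃ ≤ 2^p₃ * (1 + ‖Z ω‖^p₃) := fun ω =>
    one_add_rpow_le (‖Z ω‖) p₃ (norm_nonneg _) hp₃0
  have hintbound : Integrable (fun ω => 2^p₃ * (1 + ‖Z ω‖^p₃)) μ :=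
    (((integrable_const (1:ℝ)).add hZint).const_mul _)
  have hintW : Integrable (fun ω => W ω ^ p₃) μ := by
    refine hintbound.mono' hWp3meas.aestronglyMeasurable ?_
    refine Filter.Eventually.of_forall fun ω => ?_
    rw [Real.norm_eq_abs, abs_of_nonneg (Real.rpow_nonneg (hW0 ω) _)]
    exact hWp3bound ω
  -- integrability of Gaussian powers
  have hGpow_nn : ∀ (k : Fin m) ω, (0:ℝ) ≤ (G k ω)^n := by
    intro k ω
    have : (G k ω)^n = ((G k ω)^2)^a₀ := by rw [hn_def, pow_mul]
    rw [this]; positivity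
  have hintGk : ∀ k : Fin m, Integrable (fun ω => (G k ω)^n) μ := by
    intro k
    have h1 := integrable_pow_gauss a₀ h hh
    rw [← hGmap k] at h1
    exact (integrable_map_measure (meas_pow a₀).aestronglyMeasurable
      (hGmeas k).aemeasurable).mp h1
  have hintGv : ∀ k : Fin m, ∫ ω, (G k ω)^n ∂μ = h^a₀ * gmom a₀ := by
    intro k
    have h1 : ∫ ω, (G k ω)^n ∂μ = ∫ x, x^(2*a₀) ∂(Measure.map (G k) μ) :=
      (integral_map (hGmeas k).aemeasurable (meas_pow a₀).aestronglyMeasurable).symm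
    rw [h1, hGmap k]
    exact integral_pow_gauss a₀ h hh
  -- pointwise bound for M₀ ^ n
  have hM₀nbound : ∀ ω, (M₀ ω)^n
      ≤ 1 + ∑ k : Fin m, ((Real.sqrt h)⁻¹)^n * (G k ω)^n := by
    intro ω
    have hsum_nn : (0:ℝ) ≤ ∑ k : Fin m, ((Real.sqrt h)⁻¹)^n * (G k ω)^n :=
      Finset.sum_nonneg fun k _ => mul_nonneg (by positivity) (hGpow_nn k ω)
    rcases le_total (S ω / Real.sqrt h) 1 with hcase | hcase
    · have hm1 : M₀ ω = 1 := max_eq_left hcase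
      rw [hm1, one_pow]; linarith
    · have hm1 : M₀ ω = S ω / Real.sqrt h := max_eq_right hcase
      obtain ⟨k₀, _, hk₀⟩ := Finset.exists_mem_eq_sup'
        (Finset.univ_nonempty (α := Fin m)) (fun k : Fin m => |G k ω|)
      have hSval : S ω = |G k₀ ω| := hk₀
      have hSn : (S ω)^n ≤ ∑ k : Fin m, (G k ω)^n := by
        have habs : (S ω)^n = (G k₀ ω)^n := by
          rw [hSval, hn_def, pow_mul, pow_mul, sq_abs]
        rw [habs]
        exact Finset.single_le_sum (fun k _ => hGpow_nn k ω) (Finset.mem_univ k₀)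
      rw [hm1, div_pow]
      calc (S ω)^n / (Real.sqrt h)^n
          = ((Real.sqrt h)⁻¹)^n * (S ω)^n := by
            rw [div_eq_mul_inv, ← inv_pow, mul_comm]
        _ ≤ ((Real.sqrt h)⁻¹)^n * ∑ k : Fin m, (G k ω)^n :=
            mul_le_mul_of_nonneg_left hSn (by positivity)
        _ = ∑ k : Fin m, ((Real.sqrt h)⁻¹)^n * (G k ω)^n := by rw [Finset.mul_sum]
        _ ≤ 1 + ∑ k : Fin m, ((Real.sqrt h)⁻¹)^n * (G k ω)^n := by linarith
  have hintM₀sum : Integrable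
      (fun ω => 1 + ∑ k : Fin m, ((Real.sqrt h)⁻¹)^n * (G k ω)^n) μ :=
    (integrable_const (1:ℝ)).add
      (integrable_finset_sum _ fun k _ => (hintGk k).const_mul _)
  have hintM₀ : Integrable (fun ω => (M₀ ω)^n) μ := by
    refine hintM₀sum.mono' hM₀nmeas.aestronglyMeasurable ?_
    refine Filter.Eventually.of_forall fun ω => ?_
    rw [Real.norm_eq_abs, abs_of_nonneg (pow_nonneg (hM₀0 ω).le _)]
    exact hM₀nbound ω
  have hM₀int_le : ∫ ω, (M₀ ω)^n ∂μ ≤ κ := by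
    refine (integral_mono hintM₀ hintM₀sum hM₀nbound).trans ?_
    rw [integral_add (integrable_const (1:ℝ))
      (integrable_finset_sum _ fun k _ => (hintGk k).const_mul _),
      integral_finset_sum _ (fun k _ => (hintGk k).const_mul _)]
    simp only [integral_const_mul]
    have hch : ∀ k : Fin m, ((Real.sqrt h)⁻¹)^n * ∫ ω, (G k ω)^n ∂μ = gmom a₀ := by
      intro k
      rw [hintGv k, inv_pow, hn_def, pow_mul, Real.sq_sqrt hh.le, ← mul_assoc,
        inv_mul_cancel₀ (pow_ne_zero _ hh.ne'), one_mul]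
    rw [Finset.sum_congr rfl fun k _ => hch k, Finset.sum_const, Finset.card_univ,
      Fintype.card_fin, nsmul_eq_mul]
    simp only [integral_const, measure_univ, ENNReal.toReal_one, probReal_univ, smul_eq_mul, one_mul]
    rw [hκ_def]
  have hintWnn : 0 ≤ ∫ ω, W ω ^ p₃ ∂μ :=
    integral_nonneg fun ω => Real.rpow_nonneg (hW0 ω) _
  have hintM₀nn : 0 ≤ ∫ ω, (M₀ ω)^n ∂μ :=
    integral_nonneg fun ω => pow_nonneg (hM₀0 ω).le _
  have hZnn : 0 ≤ ∫ ω, ‖Z ω‖^p₃ ∂μ :=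
    integral_nonneg fun ω => Real.rpow_nonneg (norm_nonneg _) _
  have hintWle : ∫ ω, W ω ^ p₃ ∂μ ≤ 2^p₃ * (1 + ∫ ω, ‖Z ω‖^p₃ ∂μ) := by
    refine (integral_mono hintW hintbound hWp3bound).trans ?_
    rw [integral_const_mul, integral_add (integrable_const (1:ℝ)) hZint]
    simp only [integral_const, measure_univ, ENNReal.toReal_one, probReal_univ, smul_eq_mul, one_mul]
    exact le_refl _
  have hintprod : Integrable (fun ω => W ω ^ p₃ * (M₀ ω)^n) μ :=
    hindWM.integrable_mul hintW hintM₀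
  have hPnn : (0:ℝ) ≤ h ^ (p₁/2+p₂+p₃) := (Real.rpow_pos_of_pos hh _).le
  calc ∫ ω, |G j₁ ω| ^ p₁ * |ξ j₂ j₃ ω| ^ p₂ *
          (⨆ ki : Fin m × Fin s, ‖H ki.1 ki.2 ω - Z ω‖ ^ p₃) ∂μ
      ≤ ∫ ω, C₅ * h^(p₁/2+p₂+p₃) * (W ω ^ p₃ * (M₀ ω)^n) ∂μ := by
        refine integral_mono_of_nonneg ?_ ((hintprod.const_mul _)) key
        refine Filter.Eventually.of_forall fun ω => ?_
        refine mul_nonneg (mul_nonneg (Real.rpow_nonneg (abs_nonneg _) _)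
          (Real.rpow_nonneg (abs_nonneg _) _)) ?_
        exact Real.iSup_nonneg fun ki => Real.rpow_nonneg (norm_nonneg _) _
    _ = C₅ * h^(p₁/2+p₂+p₃) * ((∫ ω, W ω ^ p₃ ∂μ) * (∫ ω, (M₀ ω)^n ∂μ)) := by
        rw [integral_const_mul]
        congr 1
        exact hindWM.integral_mul_eq_mul_integral hintW.aestronglyMeasurable hintM₀.aestronglyMeasurable
    _ ≤ C₅ * h^(p₁/2+p₂+p₃) * ((2^p₃ * (1 + ∫ ω, ‖Z ω‖^p₃ ∂μ)) * κ) := by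
        refine mul_le_mul_of_nonneg_left ?_ (mul_nonneg hC₅0.le hPnn)
        refine mul_le_mul hintWle hM₀int_le hintM₀nn ?_
        exact mul_nonneg h2p₃.le (by linarith)
    _ = C₅ * 2^p₃ * κ * (1 + ∫ ω, ‖Z ω‖^p₃ ∂μ) * h^(p₁/2+p₂+p₃) := by ring
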